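/- Assume (A1) r = Xᵀy has all coordinates strictly positive and (A2) the off-diagonal entries of M = XᵀX are nonpositive (M_{ij} ≤ 0 for all i ≠ j). Then the matrix M = XᵀX ∈ ℝ^{d×d} is positive definite; in particular, since M = XᵀX with X ∈ ℝ^{n×d}, necessarily n ≥ d. -/

import Mathlib

open Matrix

/-- Under (A1) `r = Xᵀy > 0` and (A2) `Mᵢⱼ ≤ 0` for `i ≠ j` where `M = XᵀX`,
the matrix `M` is positive definite; in particular `n ≥ d`. -/
theorem dln_posdef (n d : ℕ) (hn : 0 < n) (hd : 0 < d)
    (X : Matrix (Fin n) (Fin d) ℝ) (y : Fin n → ℝ)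
    (M : Matrix (Fin d) (Fin d) ℝ) (r : Fin d → ℝ)
    (hM : M = Xᵀ * X) (hr : r = Xᵀ *ᵥ y)
    (hA1 : ∀ i, 0 < r i)
    (hA2 : ∀ i j, i ≠ j → M i j ≤ 0) :
    M.PosDef ∧ d ≤ n := by
  subst hM hr
  have dps : ∀ u : Fin n → ℝ, 0 ≤ u ⬝ᵥ u :=
    fun u => Finset.sum_nonneg fun i _ => mul_self_nonneg _
  have hquad : ∀ u : Fin d → ℝ, u ⬝ᵥ ((Xᵀ * X) *ᵥ u) = (X *ᵥ u) ⬝ᵥ (X *ᵥ u) := by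
    intro u
    rw [← mulVec_mulVec, dotProduct_mulVec u, vecMul_transpose]
  have key : ∀ v : Fin d → ℝ, X *ᵥ v = 0 → v = 0 := by
    intro v hv
    by_contra hvne
    set w : Fin d → ℝ := fun i => |v i| with hwdef
    have hle : w ⬝ᵥ ((Xᵀ * X) *ᵥ w) ≤ v ⬝ᵥ ((Xᵀ * X) *ᵥ v) := by
      simp only [dotProduct, mulVec, Finset.mul_sum]
      apply Finset.sum_le_sum
      intro i _
      apply Finset.sum_le_sum
      intro j _
      rcases eq_or_ne i j with h | h
      · subst h
        simp only [hwdef]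
        refine le_of_eq ?_
        calc |v i| * ((Xᵀ * X) i i * |v i|) = (Xᵀ * X) i i * (|v i| * |v i|) := by ring
          _ = (Xᵀ * X) i i * (v i * v i) := by rw [abs_mul_abs_self]
          _ = v i * ((Xᵀ * X) i i * v i) := by ring
      · have hm : (Xᵀ * X) i j ≤ 0 := hA2 i j h
        have h1 : v i * v j ≤ |v i| * |v j| := by
          calc v i * v j ≤ |v i * v j| := le_abs_self _
          _ = |v i| * |v j| := abs_mul _ _
        simp only [hwdef]
        nlinarith
    have hzero : v ⬝ᵥ ((Xᵀ * X) *ᵥ v) = 0 := by rw [hquad v, hv]; simp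
    have hnn : 0 ≤ w ⬝ᵥ ((Xᵀ * X) *ᵥ w) := by
      rw [hquad w]; exact dps _
    have hweq : (X *ᵥ w) ⬝ᵥ (X *ᵥ w) = 0 := by
      rw [← hquad w]; linarith
    have hXw : X *ᵥ w = 0 := by
      rwa [dotProduct_self_eq_zero] at hweq
    have hrw : (Xᵀ *ᵥ y) ⬝ᵥ w = 0 := by
      rw [mulVec_transpose, ← dotProduct_mulVec, hXw, dotProduct_zero]
    have hrwpos : 0 < (Xᵀ *ᵥ y) ⬝ᵥ w := by
      obtain ⟨i0, hi0⟩ := Function.ne_iff.mp hvne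
      apply Finset.sum_pos'
      · intro i _
        exact mul_nonneg (hA1 i).le (abs_nonneg _)
      · exact ⟨i0, Finset.mem_univ _, mul_pos (hA1 i0) (abs_pos.mpr hi0)⟩
    linarith
  constructor
  · refine Matrix.PosDef.of_dotProduct_mulVec_pos (by simpa using isHermitian_conjTranspose_mul_self X) fun x hx => ?_
    have h1 : star x ⬝ᵥ ((Xᵀ * X) *ᵥ x) = (X *ᵥ x) ⬝ᵥ (X *ᵥ x) := by
      simpa using hquad x
    rw [h1]
    have hXx : X *ᵥ x ≠ 0 := fun h => hx (key x h)
    have := dps (X *ᵥ x)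
    rcases this.lt_or_eq with hlt | heq
    · simpa using hlt
    · exact absurd (dotProduct_self_eq_zero.mp heq.symm) hXx
  · have hinj : Function.Injective X.mulVecLin := by
      rw [← LinearMap.ker_eq_bot, LinearMap.ker_eq_bot']
      intro v hv
      exact key v hv
    have := LinearMap.finrank_le_finrank_of_injective hinj
    simpa using this
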